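/- Let R be a commutative ring, n ≥ 1, Q = R⟦q₁,…,qₙ⟧, and A a commutative Q-algebra with a Q-bilinear symmetric Frobenius pairing ⟨⟨·,·⟩⟩ (i.e., ⟨⟨ab, c⟩⟩ = ⟨⟨a, bc⟩⟩). Suppose a, b ∈ A satisfy ⟨⟨a, b⟩⟩ = ∑_{d ≥ d₀} q^d for some d₀ ∈ ℕ^n (the power series with coefficient 1 at every multi-index d ≥ d₀ and 0 otherwise). Define χ(x) = ⟨⟨x, 1⟩⟩ · ∏ᵢ(1 − qᵢ). Then χ(a·b) = q^{d₀}. -/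

import Mathlib

open MvPowerSeries

open Classical in
noncomputable def auxT {σ : Type*} {R : Type*} [CommRing R] (d₀ : σ →₀ ℕ) (s : Finset σ) :
    MvPowerSeries σ R :=
  fun d => if d₀ ≤ d ∧ ∀ i ∈ s, d i = d₀ i then (1 : R) else 0

open Classical in
lemma auxT_coeff {σ : Type*} {R : Type*} [CommRing R] (d₀ : σ →₀ ℕ) (s : Finset σ)
    (d : σ →₀ ℕ) :
    coeff d (auxT d₀ s) = if d₀ ≤ d ∧ ∀ i ∈ s, d i = d₀ i then (1 : R) else 0 := rfl

open Classical in
lemma aux_coeff_mul_one_sub_X {σ : Type*} {R : Type*} [CommRing R]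
    (φ : MvPowerSeries σ R) (j : σ) (d : σ →₀ ℕ) :
    coeff d (φ * (1 - X j)) =
      coeff d φ -
        (if Finsupp.single j 1 ≤ d then coeff (d - Finsupp.single j 1) φ else 0) := by
  rw [mul_sub, mul_one, map_sub, MvPowerSeries.X, coeff_mul_monomial]
  simp

open Classical in
lemma aux_step {σ : Type*} {R : Type*} [CommRing R] (d₀ : σ →₀ ℕ)
    (s : Finset σ) (j : σ) (hj : j ∉ s) :
    (auxT d₀ s : MvPowerSeries σ R) * (1 - X j) = auxT d₀ (insert j s) := by
  apply MvPowerSeries.ext; intro d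
  rw [aux_coeff_mul_one_sub_X, auxT_coeff, auxT_coeff, auxT_coeff]
  set e : σ →₀ ℕ := d - Finsupp.single j 1 with he
  have hne : ∀ i, i ≠ j → e i = d i := by
    intro i hij
    rw [he, Finsupp.tsub_apply, Finsupp.single_apply, if_neg (fun h => hij h.symm),
      Nat.sub_zero]
  have hjj : e j = d j - 1 := by
    rw [he, Finsupp.tsub_apply, Finsupp.single_apply, if_pos rfl]
  have k5 : (d₀ ≤ d ∧ ∀ i ∈ insert j s, d i = d₀ i) → (d₀ ≤ d ∧ ∀ i ∈ s, d i = d₀ i) :=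
    fun h => ⟨h.1, fun i hi => h.2 i (Finset.mem_insert_of_mem hi)⟩
  have k1 : Finsupp.single j 1 ≤ d → (d₀ ≤ e ∧ ∀ i ∈ s, e i = d₀ i) →
      (d₀ ≤ d ∧ ∀ i ∈ insert j s, d i = d₀ i) → False := by
    intro hcj hc2 hc3
    have h1j : 1 ≤ d j := Finsupp.single_le_iff.mp hcj
    have hd : d j = d₀ j := hc3.2 j (Finset.mem_insert_self j s)
    have h2j : d₀ j ≤ e j := Finsupp.le_def.mp hc2.1 j
    rw [hjj] at h2j
    omega
  have k4 : Finsupp.single j 1 ≤ d → (d₀ ≤ e ∧ ∀ i ∈ s, e i = d₀ i) →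
      (d₀ ≤ d ∧ ∀ i ∈ s, d i = d₀ i) := by
    intro hcj hc2
    constructor
    · refine Finsupp.le_def.mpr fun i => ?_
      by_cases hij : i = j
      · subst hij
        have h2j := Finsupp.le_def.mp hc2.1 i
        rw [hjj] at h2j
        omega
      · have h2i := Finsupp.le_def.mp hc2.1 i
        rwa [hne i hij] at h2i
    · intro i hi
      rw [← hne i (fun h => hj (h ▸ hi))]
      exact hc2.2 i hi
  have k2 : (d₀ ≤ d ∧ ∀ i ∈ s, d i = d₀ i) → Finsupp.single j 1 ≤ d →
      ¬(d₀ ≤ e ∧ ∀ i ∈ s, e i = d₀ i) →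
      ¬(d₀ ≤ d ∧ ∀ i ∈ insert j s, d i = d₀ i) → False := by
    intro hc1 hcj hc2 hc3
    by_cases h2 : d j = d₀ j
    · exact hc3 ⟨hc1.1, fun i hi => by
        rcases Finset.mem_insert.mp hi with h | h
        · exact h ▸ h2
        · exact hc1.2 i h⟩
    · have hlt : d₀ j < d j := lt_of_le_of_ne (Finsupp.le_def.mp hc1.1 j) (Ne.symm h2)
      refine hc2 ⟨Finsupp.le_def.mpr fun i => ?_, fun i hi => ?_⟩
      · by_cases hij : i = j
        · subst hij; rw [hjj]; omega
        · rw [hne i hij]; exact Finsupp.le_def.mp hc1.1 i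
      · rw [hne i (fun h => hj (h ▸ hi))]; exact hc1.2 i hi
  have k3 : (d₀ ≤ d ∧ ∀ i ∈ s, d i = d₀ i) → ¬(Finsupp.single j 1 ≤ d) →
      ¬(d₀ ≤ d ∧ ∀ i ∈ insert j s, d i = d₀ i) → False := by
    intro hc1 hcj hc3
    have h0 : d j = 0 := by
      by_contra h0
      exact hcj (Finsupp.single_le_iff.mpr (by omega))
    have hd0 : d₀ j ≤ d j := Finsupp.le_def.mp hc1.1 j
    exact hc3 ⟨hc1.1, fun i hi => by
      rcases Finset.mem_insert.mp hi with h | h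
      · subst h; omega
      · exact hc1.2 i h⟩
  split_ifs
  any_goals ring
  all_goals exfalso
  all_goals
    first
      | (apply k1 <;> assumption)
      | (apply k2 <;> assumption)
      | (apply k3 <;> assumption)
      | (apply absurd (k4 (by assumption) (by assumption)) (by assumption))
      | (apply absurd (k5 (by assumption)) (by assumption))

open Classical in
lemma aux_key {σ : Type*} [Fintype σ] {R : Type*} [CommRing R] (d₀ : σ →₀ ℕ)
    (S : MvPowerSeries σ R)
    (hS : ∀ d : σ →₀ ℕ, coeff d S = if d₀ ≤ d then (1 : R) else 0) :
    S * (∏ i : σ, (1 - MvPowerSeries.X i)) = MvPowerSeries.monomial d₀ (1 : R) := by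
  have hS0 : S = auxT d₀ ∅ := by
    apply MvPowerSeries.ext; intro d
    rw [hS d, auxT_coeff]
    by_cases h : d₀ ≤ d
    · rw [if_pos h, if_pos ⟨h, fun i hi => absurd hi (Finset.notMem_empty i)⟩]
    · rw [if_neg h, if_neg (fun hh => h hh.1)]
  have main : ∀ s : Finset σ,
      S * (∏ i ∈ s, (1 - MvPowerSeries.X i)) = auxT d₀ s := by
    intro s
    induction s using Finset.induction_on with
    | empty => rw [Finset.prod_empty, mul_one, hS0]
    | @insert j s hj ih =>
      rw [Finset.prod_insert hj, mul_comm (1 - X j), ← mul_assoc, ih, aux_step d₀ s j hj]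
  rw [main Finset.univ]
  apply MvPowerSeries.ext; intro d
  rw [auxT_coeff, MvPowerSeries.coeff_monomial]
  congr 1
  simp only [Finset.mem_univ, forall_true_left, eq_iff_iff]
  constructor
  · rintro ⟨-, hall⟩
    exact Finsupp.ext fun i => hall i
  · rintro rfl
    exact ⟨le_rfl, fun i => rfl⟩

open Classical in
theorem stmt_4 (R : Type*) [CommRing R] (n : ℕ) (hn : 0 < n)
    (A : Type*) [CommRing A] [Algebra (MvPowerSeries (Fin n) R) A]
    (B : A →ₗ[MvPowerSeries (Fin n) R] A →ₗ[MvPowerSeries (Fin n) R]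
        MvPowerSeries (Fin n) R)
    (hsymm : ∀ a b : A, B a b = B b a)
    (hfrob : ∀ a b c : A, B (a * b) c = B a (b * c))
    (a b : A) (d₀ : Fin n →₀ ℕ)
    (hab : B a b =
      ((fun d : Fin n →₀ ℕ => if d₀ ≤ d then (1 : R) else 0) :
        MvPowerSeries (Fin n) R)) :
    B (a * b) 1 * (∏ i : Fin n, (1 - MvPowerSeries.X i)) =
      MvPowerSeries.monomial d₀ (1 : R) := by
  have h1 : B (a * b) 1 = B a b := by rw [hfrob a b 1, mul_one]
  rw [h1, hab]
  refine aux_key d₀ _ fun d => ?_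
  show (if d₀ ≤ d then (1 : R) else 0) = _
  by_cases h : d₀ ≤ d
  · rw [if_pos h]
  · rw [if_neg h]
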